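/- Every strongly transitive mean equicontinuous topological dynamical system is minimal. -/

import Mathlib

open Filter Metric Set Topology
open scoped Classical

noncomputable def lowerDensity (S : Set ℕ) : ℝ :=
  Filter.atTop.liminf (fun n => (((Finset.range (n + 1)).filter (fun i => i ∈ S)).card : ℝ) / (n + 1))

noncomputable def upperDensity (S : Set ℕ) : ℝ :=
  Filter.atTop.limsup (fun n => (((Finset.range (n + 1)).filter (fun i => i ∈ S)).card : ℝ) / (n + 1))

namespace DensityAux

noncomputable def ratio (S : Set ℕ) (n : ℕ) : ℝ :=
  (((Finset.range (n + 1)).filter (fun i => i ∈ S)).card : ℝ) / (n + 1)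

lemma ratio_nonneg (S : Set ℕ) (n : ℕ) : 0 ≤ ratio S n := by
  unfold ratio; positivity

lemma ratio_le_one (S : Set ℕ) (n : ℕ) : ratio S n ≤ 1 := by
  unfold ratio
  rw [div_le_one (by positivity)]
  calc (((Finset.range (n + 1)).filter (fun i => i ∈ S)).card : ℝ)
      ≤ ((Finset.range (n + 1)).card : ℝ) := by
        exact_mod_cast Finset.card_le_card (Finset.filter_subset _ _)
    _ = (n : ℝ) + 1 := by simp

lemma boundedBelow (S : Set ℕ) : Filter.atTop.IsBoundedUnder (· ≥ ·) (ratio S) :=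
  isBoundedUnder_of ⟨0, fun n => ratio_nonneg S n⟩

lemma boundedAbove (S : Set ℕ) : Filter.atTop.IsBoundedUnder (· ≤ ·) (ratio S) :=
  isBoundedUnder_of ⟨1, fun n => ratio_le_one S n⟩

lemma lower_le_upper (S : Set ℕ) : lowerDensity S ≤ upperDensity S :=
  liminf_le_limsup (boundedAbove S) (boundedBelow S)

lemma ratio_mono {A B : Set ℕ} (h : A ⊆ B) (n : ℕ) : ratio A n ≤ ratio B n := by
  unfold ratio
  gcongr

lemma lower_mono {A B : Set ℕ} (h : A ⊆ B) : lowerDensity A ≤ lowerDensity B :=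
  liminf_le_liminf (Eventually.of_forall fun n => ratio_mono h n) (boundedBelow A)
    ((boundedAbove B).isCoboundedUnder_ge)

lemma count_shift (S : Set ℕ) (m n : ℕ) :
    ((Finset.range (n + m + 1)).filter (fun i => i ∈ S)).card ≤
    ((Finset.range (n + 1)).filter (fun i => i ∈ {j | j + m ∈ S})).card + m := by
  have hsub : (Finset.range (n + m + 1)).filter (fun i => i ∈ S) ⊆
      ((Finset.range (n + 1)).filter (fun i => i ∈ {j | j + m ∈ S})).image (· + m)
        ∪ Finset.range m := by
    intro j hj
    simp only [Finset.mem_filter, Finset.mem_range] at hj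
    rcases lt_or_ge j m with hjm | hjm
    · exact Finset.mem_union_right _ (Finset.mem_range.mpr hjm)
    · refine Finset.mem_union_left _ (Finset.mem_image.mpr ⟨j - m, ?_, by omega⟩)
      simp only [Finset.mem_filter, Finset.mem_range, Set.mem_setOf_eq]
      refine ⟨by omega, ?_⟩
      have hjj : j - m + m = j := by omega
      rw [hjj]; exact hj.2
  have hu := Finset.card_union_le
    (((Finset.range (n + 1)).filter (fun i => i ∈ {j | j + m ∈ S})).image (· + m))
    (Finset.range m)
  have him := Finset.card_image_le
    (s := (Finset.range (n + 1)).filter (fun i => i ∈ {j | j + m ∈ S})) (f := (· + m))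
  have hcc := Finset.card_le_card hsub
  simp only [Finset.card_range] at hu
  omega

lemma ratio_shift (S : Set ℕ) (m n : ℕ) :
    ratio S (n + m) ≤ ratio {j | j + m ∈ S} n + m / (n + 1) := by
  have hc := count_shift S m n
  unfold ratio
  rw [← add_div]
  push_cast
  apply div_le_div₀ (by positivity) ?_ (by positivity) (by push_cast; linarith)
  exact_mod_cast hc

lemma lower_shift (S : Set ℕ) (m : ℕ) : lowerDensity S ≤ lowerDensity {i | i + m ∈ S} := by
  set T := {i | i + m ∈ S} with hT
  refine le_of_forall_pos_le_add fun ε hε => ?_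
  rw [← sub_le_iff_le_add]
  refine le_liminf_of_le ((boundedAbove T).isCoboundedUnder_ge) ?_
  have h1 : ∀ᶠ n in atTop, lowerDensity S - ε/2 < ratio S (n + m) := by
    have h := eventually_lt_of_lt_liminf
      (show lowerDensity S - ε/2 < lowerDensity S by linarith) (boundedBelow S)
    exact (tendsto_add_atTop_nat m).eventually h
  have h2 : ∀ᶠ n : ℕ in atTop, (m : ℝ)/(n+1) < ε/2 := by
    have h0 : Tendsto (fun n : ℕ => (m:ℝ)/(n+1)) atTop (𝓝 0) := by
      have h3 := (tendsto_const_div_atTop_nhds_zero_nat (m : ℝ)).comp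
        (tendsto_add_atTop_nat 1)
      refine h3.congr fun n => ?_
      simp only [Function.comp]
      push_cast
      ring
    exact h0.eventually_lt_const (by linarith)
  filter_upwards [h1, h2] with n hn1 hn2
  have h4 := ratio_shift S m n
  show lowerDensity S - ε ≤ ratio T n
  rw [hT]
  linarith

end DensityAux

theorem stronglyTransitive_meanEq_minimal {X : Type*} [MetricSpace X] [CompactSpace X]
    (T : X → X) (hT : Continuous T)
    (hst : ∀ U : Set X, IsOpen U → U.Nonempty → ∃ x ∈ U,
      Dense (Set.range fun n : ℕ => T^[n] x) ∧ 0 < lowerDensity {i : ℕ | T^[i] x ∈ U})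
    (hme : ∀ x : X, ∀ ε > 0, ∃ δ > 0, ∀ y : X, dist x y ≤ δ →
      upperDensity {i : ℕ | ε < dist (T^[i] x) (T^[i] y)} < ε) :
    ∀ x : X, Dense (Set.range fun n : ℕ => T^[n] x) := by
  intro x
  rw [dense_iff_inter_open]
  intro U hU hUne
  obtain ⟨z, hz⟩ := hUne
  obtain ⟨r, hr, hball⟩ := Metric.isOpen_iff.mp hU z hz
  set W := Metric.ball z (r / 2) with hW
  obtain ⟨y, hyW, hyd, hyA⟩ := hst W Metric.isOpen_ball ⟨z, by simp [hW, hr, half_pos hr]⟩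
  set A : Set ℕ := {i : ℕ | T^[i] y ∈ W} with hA
  set d := lowerDensity A with hd
  set ε : ℝ := min (r / 2) d / 2 with hε
  have hε0 : 0 < ε := by positivity
  have hεr : ε ≤ r / 2 := le_trans (by linarith [min_le_left (r/2) d, hε0]) (le_refl _)
  have hεd : ε < d := by
    have := min_le_right (r/2) d
    have : ε ≤ d / 2 := by rw [hε]; linarith
    linarith
  obtain ⟨δ, hδ0, hδ⟩ := hme x ε hε0
  -- find m with T^[m] y close to x
  have : (Metric.ball x δ ∩ Set.range fun n : ℕ => T^[n] y).Nonempty :=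
    hyd.inter_open_nonempty _ Metric.isOpen_ball ⟨x, Metric.mem_ball_self hδ0⟩
  obtain ⟨_, hwb, m, rfl⟩ := this
  have hxm : dist x (T^[m] y) ≤ δ := le_of_lt (by rwa [Metric.mem_ball, dist_comm] at hwb)
  have hB := hδ (T^[m] y) hxm
  set B : Set ℕ := {i : ℕ | ε < dist (T^[i] x) (T^[i] (T^[m] y))} with hBdef
  set A' : Set ℕ := {i | i + m ∈ A} with hA'
  have hA'd : d ≤ lowerDensity A' := DensityAux.lower_shift A m
  -- A' ⊄ B
  have hnot : ¬ (A' ⊆ B) := by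
    intro hsub
    have h1 : lowerDensity A' ≤ lowerDensity B := DensityAux.lower_mono hsub
    have h2 : lowerDensity B ≤ upperDensity B := DensityAux.lower_le_upper B
    linarith
  obtain ⟨i, hiA', hiB⟩ := Set.not_subset.mp hnot
  refine ⟨T^[i] x, ?_, ⟨i, rfl⟩⟩
  have h1 : T^[i + m] y ∈ W := hiA'
  have h2 : dist (T^[i] x) (T^[i] (T^[m] y)) ≤ ε := le_of_not_gt hiB
  have h3 : T^[i] (T^[m] y) = T^[i + m] y := by
    rw [Function.iterate_add_apply]
  apply hball
  rw [Metric.mem_ball]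
  calc dist (T^[i] x) z ≤ dist (T^[i] x) (T^[i + m] y) + dist (T^[i + m] y) z :=
        dist_triangle _ _ _
    _ < ε + r / 2 := by
        apply add_lt_add_of_le_of_lt (h3 ▸ h2)
        simpa [hW, Metric.mem_ball] using h1
    _ ≤ r := by linarith
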